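/- For every natural number N there exists a connected bipartite 3-regular simple graph G on more than N vertices such that the adjacency matrix of G over ℝ has no eigenvalue in the open interval (−1, 1). In other words, there are infinitely many connected cubic bipartite graphs with no eigenvalues in (−1, 1). -/

import Mathlib

open Polynomial

namespace CubicGap

/-- Adjacency relation of our cubic bipartite graph on `Bool × Bool × ZMod n`. -/
def adjFun (n : ℕ) (u w : Bool × Bool × ZMod n) : Prop :=
  u.1 ≠ w.1 ∧ (u.2.2 = w.2.2 ∨ (u.2.1 ≠ w.2.1 ∧
    ((u.1 = false ∧ w.2.2 = u.2.2 + 1) ∨ (w.1 = false ∧ u.2.2 = w.2.2 + 1))))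

def G (n : ℕ) : SimpleGraph (Bool × Bool × ZMod n) where
  Adj := adjFun n
  symm := by
    constructor
    rintro ⟨s, b, i⟩ ⟨t, c, j⟩ ⟨h1, h2⟩
    refine ⟨h1.symm, ?_⟩
    rcases h2 with h | ⟨hb, h | h⟩
    · exact Or.inl h.symm
    · exact Or.inr ⟨hb.symm, Or.inr ⟨h.1, h.2⟩⟩
    · exact Or.inr ⟨hb.symm, Or.inl ⟨h.1, h.2⟩⟩
  loopless := by constructor; rintro ⟨s, b, i⟩ ⟨h1, _⟩; exact h1 rfl

instance (n : ℕ) : DecidableRel (G n).Adj := fun u w => by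
  show Decidable (adjFun n u w)
  unfold adjFun
  infer_instance

section
variable {n : ℕ} [Fact (1 < n)]

instance : NeZero n := ⟨by have := Fact.out (p := 1 < n); omega⟩

lemma one_ne_zero' : (1 : ZMod n) ≠ 0 := by
  intro h
  have := congrArg ZMod.val h
  rw [ZMod.val_one, ZMod.val_zero] at this
  omega

lemma neg_one_ne_zero' : (-1 : ZMod n) ≠ 0 := by
  intro h
  exact one_ne_zero' (n := n) (by rwa [neg_eq_zero] at h)

lemma nbrF (b : Bool) (i : ZMod n) :
    (G n).neighborFinset (false, b, i) = {(true, b, i), (true, !b, i), (true, !b, i + 1)} := by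
  ext ⟨s, c, j⟩
  simp only [SimpleGraph.mem_neighborFinset, Finset.mem_insert, Finset.mem_singleton]
  show adjFun n (false, b, i) (s, c, j) ↔ _
  unfold adjFun
  cases s <;> cases b <;> cases c <;>
    simp_all [Prod.ext_iff, eq_comm]

lemma nbrT (c : Bool) (j : ZMod n) :
    (G n).neighborFinset (true, c, j) = {(false, c, j), (false, !c, j), (false, !c, j + (-1))} := by
  ext ⟨s, b, i⟩
  simp only [SimpleGraph.mem_neighborFinset, Finset.mem_insert, Finset.mem_singleton]
  show adjFun n (true, c, j) (s, b, i) ↔ _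
  unfold adjFun
  have key : ∀ i : ZMod n, j = i + 1 ↔ i = j + (-1) := by
    intro i; constructor <;> (rintro rfl; ring)
  cases s <;> cases b <;> cases c <;>
    simp_all [Prod.ext_iff, eq_comm, key]

lemma regular : (G n).IsRegularOfDegree 3 := by
  rintro ⟨s, b, i⟩
  cases s
  · rw [SimpleGraph.degree, nbrF]
    rw [Finset.card_insert_of_notMem, Finset.card_insert_of_notMem, Finset.card_singleton]
    · simp only [Finset.mem_singleton, Prod.mk.injEq]
      intro ⟨_, _, h⟩
      exact one_ne_zero' (n := n) ((left_eq_add).mp h)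
    · simp only [Finset.mem_insert, Finset.mem_singleton, Prod.mk.injEq]
      rintro (⟨_, h, _⟩ | ⟨_, h, _⟩) <;> exact (Bool.not_ne_self b) h.symm
  · rw [SimpleGraph.degree, nbrT]
    rw [Finset.card_insert_of_notMem, Finset.card_insert_of_notMem, Finset.card_singleton]
    · simp only [Finset.mem_singleton, Prod.mk.injEq]
      intro ⟨_, _, h⟩
      exact neg_one_ne_zero' (n := n) ((left_eq_add).mp h)
    · simp only [Finset.mem_insert, Finset.mem_singleton, Prod.mk.injEq]
      rintro (⟨_, h, _⟩ | ⟨_, h, _⟩) <;> exact (Bool.not_ne_self b) h.symm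

lemma adj_cell (b c : Bool) (i : ZMod n) : (G n).Adj (false, b, i) (true, c, i) :=
  ⟨by simp, Or.inl rfl⟩

lemma adj_step (i : ZMod n) : (G n).Adj (false, false, i) (true, true, i + 1) :=
  ⟨by simp, Or.inr ⟨by simp, Or.inl ⟨rfl, rfl⟩⟩⟩

lemma reach_all (u : Bool × Bool × ZMod n) :
    (G n).Reachable (false, false, (0 : ZMod n)) u := by
  have hnat : ∀ m : ℕ, (G n).Reachable (false, false, (0 : ZMod n)) (false, false, (m : ZMod n)) := by
    intro m
    induction m with
    | zero =>
      have h0 : ((0 : ℕ) : ZMod n) = 0 := Nat.cast_zero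
      rw [h0]
    | succ k ih =>
      refine ih.trans ?_
      have h1 := (adj_step (n := n) (k : ZMod n)).reachable
      have h2 := (adj_cell (n := n) false true ((k : ZMod n) + 1)).reachable
      have : ((k + 1 : ℕ) : ZMod n) = (k : ZMod n) + 1 := by push_cast; ring
      rw [this]
      exact h1.trans h2.symm
  obtain ⟨s, b, i⟩ := u
  have hb : (G n).Reachable (false, false, (0 : ZMod n)) (false, false, i) := by
    have := hnat i.val
    rwa [ZMod.natCast_rightInverse i] at this
  cases s
  · exact hb.trans (((adj_cell false false i).reachable).trans
      ((adj_cell b false i).reachable.symm))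
  · exact hb.trans (adj_cell false b i).reachable

lemma connected : (G n).Connected := by
  rw [SimpleGraph.connected_iff]
  exact ⟨fun u v => (reach_all u).symm.trans (reach_all v), ⟨(false, false, 0)⟩⟩

lemma colorable : (G n).Colorable 2 :=
  ⟨SimpleGraph.Coloring.mk (fun u => if u.1 then 0 else 1)
    (by rintro ⟨s, b, i⟩ ⟨t, c, j⟩ ⟨h1, _⟩; cases s <;> cases t <;> simp_all)⟩

lemma shift_sum (c : ZMod n) (F : ZMod n → ℝ) : ∑ i, F (i + c) = ∑ i, F i :=
  Fintype.sum_equiv (Equiv.addRight c) _ _ (fun _ => rfl)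

lemma side_bound (p q : ZMod n → ℝ) (d : ZMod n) :
    ∑ i, (p i ^ 2) + ∑ i, (q i ^ 2) ≤
      ∑ i, (p i + q i + q (i + d)) ^ 2 + ∑ i, (q i + p i + p (i + d)) ^ 2 := by
  have key : ∑ i, (p i + q i + q (i + d)) ^ 2 + ∑ i, (q i + p i + p (i + d)) ^ 2
      = (∑ i, (p i ^ 2 + q i ^ 2 + (p i + q i + p (i + d) + q (i + d)) ^ 2))
        + ((∑ i, 2 * (p i * q i)) - ∑ i, (fun j => 2 * (p j * q j)) (i + d)) := by
    rw [← Finset.sum_add_distrib, ← Finset.sum_sub_distrib, ← Finset.sum_add_distrib]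
    exact Finset.sum_congr rfl (fun i _ => by ring)
  rw [key, shift_sum d (fun j => 2 * (p j * q j)), sub_self, add_zero, ← Finset.sum_add_distrib]
  apply Finset.sum_le_sum
  intro i _
  nlinarith [sq_nonneg (p i + q i + p (i + d) + q (i + d))]

lemma mulvec_eval (v : Bool × Bool × ZMod n → ℝ) :
    ∀ (b : Bool) (i : ZMod n),
      ((G n).adjMatrix ℝ).mulVec v (false, b, i)
        = v (true, b, i) + v (true, !b, i) + v (true, !b, i + 1) ∧
      ((G n).adjMatrix ℝ).mulVec v (true, b, i)
        = v (false, b, i) + v (false, !b, i) + v (false, !b, i + (-1)) := by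
  intro b i
  constructor
  · rw [SimpleGraph.adjMatrix_mulVec_apply, nbrF]
    rw [Finset.sum_insert, Finset.sum_insert, Finset.sum_singleton, add_assoc]
    · simp only [Finset.mem_singleton, Prod.mk.injEq]
      intro ⟨_, _, h⟩
      exact one_ne_zero' (n := n) ((left_eq_add).mp h)
    · simp only [Finset.mem_insert, Finset.mem_singleton, Prod.mk.injEq]
      rintro (⟨_, h, _⟩ | ⟨_, h, _⟩) <;> exact (Bool.not_ne_self b) h.symm
  · rw [SimpleGraph.adjMatrix_mulVec_apply, nbrT]
    rw [Finset.sum_insert, Finset.sum_insert, Finset.sum_singleton, add_assoc]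
    · simp only [Finset.mem_singleton, Prod.mk.injEq]
      intro ⟨_, _, h⟩
      exact neg_one_ne_zero' (n := n) ((left_eq_add).mp h)
    · simp only [Finset.mem_insert, Finset.mem_singleton, Prod.mk.injEq]
      rintro (⟨_, h, _⟩ | ⟨_, h, _⟩) <;> exact (Bool.not_ne_self b) h.symm

/-- The key quadratic inequality: `‖A v‖² ≥ ‖v‖²`. -/
lemma quad (v : Bool × Bool × ZMod n → ℝ) :
    ∑ u, (v u) ^ 2 ≤ ∑ u, (((G n).adjMatrix ℝ).mulVec v u) ^ 2 := by
  have expand : ∀ F : Bool × Bool × ZMod n → ℝ,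
      ∑ u, F u = (∑ i, F (true, true, i) + ∑ i, F (true, false, i))
        + (∑ i, F (false, true, i) + ∑ i, F (false, false, i)) := by
    intro F
    rw [Fintype.sum_prod_type, Fintype.sum_bool]
    congr 1 <;> rw [Fintype.sum_prod_type, Fintype.sum_bool]
  rw [expand (fun u => (v u) ^ 2), expand (fun u => (((G n).adjMatrix ℝ).mulVec v u) ^ 2)]
  have hmv := mulvec_eval (n := n) v
  have e1 : ∀ i : ZMod n, ((G n).adjMatrix ℝ).mulVec v (true, true, i)
      = v (false, true, i) + v (false, false, i) + v (false, false, i + (-1)) :=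
    fun i => (hmv true i).2
  have e2 : ∀ i : ZMod n, ((G n).adjMatrix ℝ).mulVec v (true, false, i)
      = v (false, false, i) + v (false, true, i) + v (false, true, i + (-1)) :=
    fun i => (hmv false i).2
  have e3 : ∀ i : ZMod n, ((G n).adjMatrix ℝ).mulVec v (false, true, i)
      = v (true, true, i) + v (true, false, i) + v (true, false, i + 1) :=
    fun i => (hmv true i).1
  have e4 : ∀ i : ZMod n, ((G n).adjMatrix ℝ).mulVec v (false, false, i)
      = v (true, false, i) + v (true, true, i) + v (true, true, i + 1) :=
    fun i => (hmv false i).1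
  simp only [e1, e2, e3, e4]
  have hY := side_bound (fun i => v (false, true, i)) (fun i => v (false, false, i)) (-1)
  have hX := side_bound (fun i => v (true, false, i)) (fun i => v (true, true, i)) 1
  calc (∑ i, v (true, true, i) ^ 2 + ∑ i, v (true, false, i) ^ 2)
        + (∑ i, v (false, true, i) ^ 2 + ∑ i, v (false, false, i) ^ 2)
      = (∑ i, v (true, false, i) ^ 2 + ∑ i, v (true, true, i) ^ 2)
        + (∑ i, v (false, true, i) ^ 2 + ∑ i, v (false, false, i) ^ 2) := by ring
    _ ≤ (∑ i, (v (true, false, i) + v (true, true, i) + v (true, true, i + 1)) ^ 2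
          + ∑ i, (v (true, true, i) + v (true, false, i) + v (true, false, i + 1)) ^ 2)
        + (∑ i, (v (false, true, i) + v (false, false, i) + v (false, false, i + (-1))) ^ 2
          + ∑ i, (v (false, false, i) + v (false, true, i) + v (false, true, i + (-1))) ^ 2) := by
        exact add_le_add hX hY
    _ = _ := by ring

end

end CubicGap

/-- There are infinitely many connected cubic bipartite graphs with no eigenvalue in the
open interval `(−1, 1)`: for every `N` there is such a graph on more than `N` vertices. -/
theorem exists_large_cubic_bipartite_no_eigenvalue_near_zero (N : ℕ) :
    ∃ (V : Type) (_ : Fintype V) (_ : DecidableEq V) (G : SimpleGraph V)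
      (_ : DecidableRel G.Adj),
      G.Connected ∧ G.Colorable 2 ∧ G.IsRegularOfDegree 3 ∧ N < Fintype.card V ∧
        ∀ μ ∈ spectrum ℝ (G.adjMatrix ℝ), μ ∉ Set.Ioo (-1 : ℝ) 1 := by
  haveI : Fact (1 < N + 2) := ⟨by omega⟩
  refine ⟨Bool × Bool × ZMod (N + 2), inferInstance, inferInstance, CubicGap.G (N + 2),
    inferInstance, CubicGap.connected, CubicGap.colorable, CubicGap.regular, ?_, ?_⟩
  · rw [Fintype.card_prod, Fintype.card_prod, Fintype.card_bool, ZMod.card]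
    omega
  · intro μ hμ hI
    set A := (CubicGap.G (N + 2)).adjMatrix ℝ with hA
    have h1 : ¬ IsUnit (algebraMap ℝ (Matrix (Bool × Bool × ZMod (N + 2))
        (Bool × Bool × ZMod (N + 2)) ℝ) μ - A) := spectrum.mem_iff.mp hμ
    have hdet : (algebraMap ℝ (Matrix (Bool × Bool × ZMod (N + 2))
        (Bool × Bool × ZMod (N + 2)) ℝ) μ - A).det = 0 := by
      by_contra h
      exact h1 ((Matrix.isUnit_iff_isUnit_det _).mpr (isUnit_iff_ne_zero.mpr h))
    obtain ⟨v, hv0, hv⟩ := (Matrix.exists_mulVec_eq_zero_iff).mpr hdet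
    have hAv : A.mulVec v = μ • v := by
      have h2 : (algebraMap ℝ (Matrix (Bool × Bool × ZMod (N + 2))
          (Bool × Bool × ZMod (N + 2)) ℝ) μ - A).mulVec v = μ • v - A.mulVec v := by
        rw [Matrix.sub_mulVec]
        congr 1
        rw [Algebra.algebraMap_eq_smul_one, Matrix.smul_mulVec, Matrix.one_mulVec]
      rw [h2] at hv
      exact (sub_eq_zero.mp hv).symm
    have hq := CubicGap.quad (n := N + 2) v
    rw [hAv] at hq
    have hrw : ∑ u, ((μ • v) u) ^ 2 = μ ^ 2 * ∑ u, (v u) ^ 2 := by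
      rw [Finset.mul_sum]
      exact Finset.sum_congr rfl (fun u _ => by simp [Pi.smul_apply, smul_eq_mul]; ring)
    rw [hrw] at hq
    have hex : ∃ u, v u ≠ 0 := by
      by_contra h
      push_neg at h
      exact hv0 (funext h)
    obtain ⟨u0, hu0⟩ := hex
    have hpos : 0 < ∑ u, (v u) ^ 2 := by
      have h2 : (v u0) ^ 2 ≤ ∑ u, (v u) ^ 2 :=
        Finset.single_le_sum (fun i _ => sq_nonneg (v i)) (Finset.mem_univ u0)
      have h3 : 0 < (v u0) ^ 2 :=
        lt_of_le_of_ne (sq_nonneg _) (Ne.symm (pow_ne_zero 2 hu0))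
      linarith
    obtain ⟨hl, hr⟩ := hI
    have h4 : μ ^ 2 < 1 := by nlinarith
    have h5 : μ ^ 2 * ∑ u, (v u) ^ 2 < ∑ u, (v u) ^ 2 := by nlinarith
    linarith
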